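/- (Gradient-descent contraction step.) Let f : ℝ^d → ℝ be differentiable, μ-strongly convex, and L-smooth with 0 < μ ≤ L, and let η ∈ [0, 2/(μ + L)]. Then for all x, y ∈ ℝ^d, ‖(x − y) − η·(∇f(x) − ∇f(y))‖ ≤ (1 − ημ)·‖x − y‖. -/

import Mathlib

open scoped RealInnerProductSpace

section Aux

variable {F : Type*} [NormedAddCommGroup F] [InnerProductSpace ℝ F] [CompleteSpace F]

/-- Descent lemma: an L-Lipschitz gradient gives a quadratic upper bound. -/
lemma gd_descent (f : F → ℝ) (L : ℝ)
    (hdiff : ∀ x, DifferentiableAt ℝ f x)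
    (hsmooth : ∀ x y, ‖gradient f x - gradient f y‖ ≤ L * ‖x - y‖)
    (x y : F) :
    f y ≤ f x + ⟪gradient f x, y - x⟫ + L / 2 * ‖y - x‖ ^ 2 := by
  set v := y - x with hv
  have hline : ∀ t : ℝ, HasDerivAt (fun t : ℝ => x + t • v) v t := by
    intro t
    simpa using (((hasDerivAt_id t).smul_const v).const_add x)
  have hφ : ∀ t : ℝ, HasDerivAt (fun t : ℝ => f (x + t • v))
      ⟪gradient f (x + t • v), v⟫ t := by
    intro t
    have hfd : HasFDerivAt f (InnerProductSpace.toDual ℝ F (gradient f (x + t • v)))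
        (x + t • v) :=
      (hasGradientAt_iff_hasFDerivAt).mp (hdiff _).hasGradientAt
    simpa [InnerProductSpace.toDual_apply_apply, Function.comp_def] using hfd.comp_hasDerivAt t (hline t)
  set c : ℝ := ⟪gradient f x, v⟫ with hc
  set n : ℝ := ‖v‖ ^ 2 with hn
  set θ : ℝ → ℝ := fun t => f x + t * c + L / 2 * n * t ^ 2 - f (x + t • v) with hθdef
  have hθ : ∀ t : ℝ, HasDerivAt θ (c + L / 2 * n * (2 * t) - ⟪gradient f (x + t • v), v⟫) t := by
    intro t
    have h1 : HasDerivAt (fun t : ℝ => f x + t * c + L / 2 * n * t ^ 2)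
        (c + L / 2 * n * (2 * t)) t := by
      have := (((hasDerivAt_id t).mul_const c).const_add (f x)).add
        ((hasDerivAt_pow 2 t).const_mul (L / 2 * n))
      simpa [mul_comm, mul_assoc, mul_left_comm, Pi.add_def] using this
    exact h1.sub (hφ t)
  have hmono : MonotoneOn θ (Set.Icc (0 : ℝ) 1) := by
    apply monotoneOn_of_deriv_nonneg (convex_Icc 0 1)
    · exact fun t _ => ((hθ t).continuousAt).continuousWithinAt
    · exact fun t _ => ((hθ t).differentiableAt).differentiableWithinAt
    · intro t ht
      rw [interior_Icc] at ht
      rw [(hθ t).deriv]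
      have hineq : ⟪gradient f (x + t • v) - gradient f x, v⟫ ≤ L * t * n := by
        calc ⟪gradient f (x + t • v) - gradient f x, v⟫
            ≤ ‖gradient f (x + t • v) - gradient f x‖ * ‖v‖ := real_inner_le_norm _ _
          _ ≤ (L * ‖(x + t • v) - x‖) * ‖v‖ := by
              have := hsmooth (x + t • v) x
              nlinarith [norm_nonneg v, this, norm_nonneg (gradient f (x + t • v) - gradient f x)]
          _ = L * t * n := by
              rw [add_sub_cancel_left, norm_smul]
              simp [hn, abs_of_pos ht.1]
              ring
      have hsplit : ⟪gradient f (x + t • v), v⟫ - c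
          = ⟪gradient f (x + t • v) - gradient f x, v⟫ := by
        rw [inner_sub_left]
      linarith
  have h01 := hmono (Set.mem_Icc.mpr ⟨le_refl 0, zero_le_one⟩)
    (Set.mem_Icc.mpr ⟨zero_le_one, le_refl 1⟩) zero_le_one
  have e0 : θ 0 = 0 := by simp [hθdef]
  have exy : x + v = y := by rw [hv]; abel
  have e1 : θ 1 = f x + c + L / 2 * n - f y := by
    simp only [hθdef, one_smul, exy, one_pow, one_mul]
    ring
  rw [e0, e1] at h01
  linarith

/-- Co-coercivity from a linear lower bound and a quadratic upper bound. -/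
lemma gd_cocoercive (h : F → ℝ) (g : F → F) (C : ℝ) (hC : 0 < C)
    (hlow : ∀ x y, h x + ⟪g x, y - x⟫ ≤ h y)
    (hup : ∀ x y, h y ≤ h x + ⟪g x, y - x⟫ + C / 2 * ‖y - x‖ ^ 2) :
    ∀ x y, ‖g x - g y‖ ^ 2 ≤ C * ⟪g x - g y, x - y⟫ := by
  have key : ∀ x y, h x + ⟪g x, y - x⟫ + 1 / (2 * C) * ‖g y - g x‖ ^ 2 ≤ h y := by
    intro x y
    set w := g y - g x with hw
    set z := y - C⁻¹ • w with hz
    have A := hlow x z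
    have B := hup y z
    have ezy : z - y = -(C⁻¹ • w) := by rw [hz]; abel
    have ezx : z - x = (y - x) - C⁻¹ • w := by rw [hz]; abel
    have e1 : ⟪g x, z - x⟫ = ⟪g x, y - x⟫ - C⁻¹ * ⟪g x, w⟫ := by
      rw [ezx, inner_sub_right, real_inner_smul_right]
    have e2 : ⟪g y, z - y⟫ = -(C⁻¹ * ⟪g y, w⟫) := by
      rw [ezy, inner_neg_right, real_inner_smul_right]
    have e3 : ‖z - y‖ ^ 2 = (C⁻¹) ^ 2 * ‖w‖ ^ 2 := by
      rw [ezy, norm_neg, norm_smul]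
      simp [abs_of_pos (inv_pos.mpr hC), mul_pow]
    have e4 : ⟪g y, w⟫ - ⟪g x, w⟫ = ‖w‖ ^ 2 := by
      rw [← inner_sub_left, ← hw, real_inner_self_eq_norm_sq]
    rw [e1] at A
    rw [e2, e3] at B
    have hCinv : C⁻¹ = 1 / C := by field_simp
    have hCne : C ≠ 0 := ne_of_gt hC
    have expand : h x + ⟪g x, y - x⟫ - C⁻¹ * ⟪g x, w⟫
        ≤ h y - C⁻¹ * ⟪g y, w⟫ + C / 2 * ((C⁻¹) ^ 2 * ‖w‖ ^ 2) := by linarith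
    have : C / 2 * ((C⁻¹) ^ 2 * ‖w‖ ^ 2) = 1 / (2 * C) * ‖w‖ ^ 2 := by
      field_simp
    rw [this] at expand
    have : C⁻¹ * ⟪g y, w⟫ - C⁻¹ * ⟪g x, w⟫ = C⁻¹ * ‖w‖ ^ 2 := by
      rw [← mul_sub, e4]
    have hfin : C⁻¹ * ‖w‖ ^ 2 - 1 / (2 * C) * ‖w‖ ^ 2 = 1 / (2 * C) * ‖w‖ ^ 2 := by
      first
      | (field_simp; ring)
      | field_simp
    linarith
  intro x y
  have K1 := key x y
  have K2 := key y x
  have e5 : ‖g x - g y‖ = ‖g y - g x‖ := norm_sub_rev _ _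
  have e6 : ⟪g y, x - y⟫ = -⟪g y, y - x⟫ := by
    rw [← inner_neg_right]; congr 1; abel
  have e7 : ⟪g x - g y, x - y⟫ = -⟪g x, y - x⟫ - ⟪g y, x - y⟫ := by
    rw [inner_sub_left]
    rw [show ⟪g x, x - y⟫ = -⟪g x, y - x⟫ by rw [← inner_neg_right]; congr 1; abel]
  rw [e5] at K2 ⊢
  rw [e7]
  have hsum : 2 * (1 / (2 * C)) * ‖g y - g x‖ ^ 2 ≤ -⟪g x, y - x⟫ - ⟪g y, x - y⟫ := by
    linarith
  have h2C : 2 * (1 / (2 * C)) = C⁻¹ := by field_simp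
  rw [h2C] at hsum
  have hCne : C ≠ 0 := ne_of_gt hC
  have hid : ‖g y - g x‖ ^ 2 = C * (C⁻¹ * ‖g y - g x‖ ^ 2) := by
    field_simp
  rw [hid]
  exact mul_le_mul_of_nonneg_left hsum hC.le

end Aux

set_option maxHeartbeats 1000000 in
/-- Gradient-descent contraction step for a μ-strongly convex, L-smooth function
with step size η ∈ [0, 2/(μ+L)]. -/
theorem gradient_descent_contraction
    {d : ℕ}
    (f : EuclideanSpace ℝ (Fin d) → ℝ)
    (μ L : ℝ) (hμ : 0 < μ) (hμL : μ ≤ L)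
    (hdiff : ∀ x, DifferentiableAt ℝ f x)
    (hsc : ∀ x y : EuclideanSpace ℝ (Fin d),
      f y ≥ f x + ⟪gradient f x, y - x⟫ + μ / 2 * ‖y - x‖ ^ 2)
    (hsmooth : ∀ x y : EuclideanSpace ℝ (Fin d),
      ‖gradient f x - gradient f y‖ ≤ L * ‖x - y‖)
    (η : ℝ) (hη : η ∈ Set.Icc (0 : ℝ) (2 / (μ + L))) :
    ∀ x y : EuclideanSpace ℝ (Fin d),
      ‖(x - y) - η • (gradient f x - gradient f y)‖ ≤ (1 - η * μ) * ‖x - y‖ := by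
  intro x y
  set g := gradient f with hg
  -- auxiliary function h = f - μ/2 ‖·‖² with "gradient" gh
  set h := fun p => f p - μ / 2 * ‖p‖ ^ 2 with hh
  set gh := fun p => g p - μ • p with hgh
  have hexp : ∀ p q : EuclideanSpace ℝ (Fin d), ‖q - p‖ ^ 2 = ‖q‖ ^ 2 - 2 * ⟪p, q⟫ + ‖p‖ ^ 2 := by
    intro p q
    rw [← real_inner_self_eq_norm_sq, ← real_inner_self_eq_norm_sq, ← real_inner_self_eq_norm_sq]
    simp [inner_sub_left, inner_sub_right, real_inner_comm p q]
    rw [norm_sub_sq_real, real_inner_comm]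
  have hinner : ∀ p q r : EuclideanSpace ℝ (Fin d), ⟪μ • p, q - r⟫ = μ * ⟪p, q⟫ - μ * ⟪p, r⟫ := by
    intro p q r
    rw [real_inner_smul_left, inner_sub_right]
    ring
  -- lower bound for h (convexity of h, from strong convexity of f)
  have hlow : ∀ p q, h p + ⟪gh p, q - p⟫ ≤ h q := by
    intro p q
    have := hsc p q
    rw [hexp p q] at this
    simp only [hh, hgh, inner_sub_left, hinner]
    have hpp : ⟪p, p⟫ = ‖p‖ ^ 2 := real_inner_self_eq_norm_sq p
    nlinarith [this]
  -- descent lemma for f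
  have hdesc := gd_descent f L hdiff hsmooth
  -- quadratic upper bound for h with any constant C ≥ L - μ
  have hup : ∀ ε : ℝ, 0 < ε → ∀ p q,
      h q ≤ h p + ⟪gh p, q - p⟫ + (L - μ + ε) / 2 * ‖q - p‖ ^ 2 := by
    intro ε hε p q
    have hd := hdesc p q
    rw [hexp p q] at hd ⊢
    simp only [hh, hgh, inner_sub_left, hinner]
    have hpp : ⟪p, p⟫ = ‖p‖ ^ 2 := real_inner_self_eq_norm_sq p
    have hsq : 0 ≤ ‖q‖ ^ 2 - 2 * ⟪p, q⟫ + ‖p‖ ^ 2 := by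
      rw [← hexp p q]; positivity
    nlinarith [hd]
  -- co-coercivity of gh with constant L - μ (by taking ε → 0)
  set z := x - y with hz
  set w := gh x - gh y with hw
  have hLμ : ∀ ε : ℝ, 0 < ε → ‖w‖ ^ 2 ≤ (L - μ + ε) * ⟪w, z⟫ := by
    intro ε hε
    have := gd_cocoercive h gh (L - μ + ε) (by linarith) hlow (hup ε hε) x y
    exact this
  have hwz : 0 ≤ ⟪w, z⟫ := by
    have := hLμ 1 one_pos
    nlinarith [sq_nonneg ‖w‖]
  have hco : ‖w‖ ^ 2 ≤ (L - μ) * ⟪w, z⟫ := by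
    set N : ℝ := ‖w‖ ^ 2 with hN
    set S : ℝ := ⟪w, z⟫ with hS
    clear_value N S
    by_contra hcon
    push_neg at hcon
    rcases eq_or_lt_of_le hwz with heq | hpos
    · have := hLμ 1 one_pos
      rw [← heq] at this hcon
      simp only [mul_zero] at this hcon
      exact absurd this (not_le.mpr hcon)
    · have hεpos : 0 < (N - (L - μ) * S) / (2 * S) :=
        div_pos (by linarith) (by linarith)
      have hkey := hLμ _ hεpos
      have h2 : (L - μ + (N - (L - μ) * S) / (2 * S)) * S
          = (L - μ) * S + (N - (L - μ) * S) / 2 := by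
        have hSne : S ≠ 0 := ne_of_gt hpos
        field_simp
      rw [h2] at hkey
      linarith
  -- now the scalar computation
  set v := g x - g y with hv
  have hwv : w = v - μ • z := by
    rw [hw, hgh, hv, hz]
    simp only
    module
  set t : ℝ := ‖z‖ ^ 2 with ht
  set n : ℝ := ‖v‖ ^ 2 with hn
  set s : ℝ := ⟪v, z⟫ with hs
  -- expand co-coercivity
  have hzz : ⟪z, z⟫ = t := real_inner_self_eq_norm_sq z
  have hvv : ⟪v, v⟫ = n := real_inner_self_eq_norm_sq v
  have hwn : ‖w‖ ^ 2 = n - 2 * μ * s + μ ^ 2 * t := by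
    rw [hwv, norm_sub_sq_real, real_inner_smul_right, norm_smul, mul_pow, ← hs, ← hn]
    rw [show ‖z‖ ^ 2 = t from rfl, Real.norm_eq_abs, sq_abs]
    ring
  have hwzs : ⟪w, z⟫ = s - μ * t := by
    rw [hwv, inner_sub_left, real_inner_smul_left, hzz, ← hs]
  rw [hwn, hwzs] at hco
  -- strong monotonicity: s ≥ μ t
  have hmon : μ * t ≤ s := by
    have h1 := hsc x y
    have h2 := hsc y x
    have e1 : ⟪g y, x - y⟫ = -⟪g y, y - x⟫ := by
      rw [← inner_neg_right]; congr 1; abel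
    have e2 : ⟪v, z⟫ = -⟪g x, y - x⟫ - ⟪g y, x - y⟫ := by
      rw [hv, hz, inner_sub_left]
      rw [show ⟪g x, x - y⟫ = -⟪g x, y - x⟫ by rw [← inner_neg_right]; congr 1; abel]
    have e3 : ‖y - x‖ ^ 2 = t := by rw [ht, hz, norm_sub_rev]
    have e4 : ‖x - y‖ ^ 2 = t := by rw [ht, hz]
    rw [e3] at h1
    rw [e4] at h2
    rw [hs, e2]
    linarith
  -- bounds on η
  obtain ⟨hη0, hη2⟩ := hη
  have hμL' : 0 < μ + L := by linarith
  have hημL : η * (μ + L) ≤ 2 := by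
    rw [le_div_iff₀ hμL'] at hη2
    linarith
  have hημ1 : η * μ ≤ 1 := by nlinarith
  -- final computation on squares
  have hLHS : ‖z - η • v‖ ^ 2 = t - 2 * η * s + η ^ 2 * n := by
    rw [ht, hn, hs, norm_sub_sq_real, real_inner_smul_right, norm_smul, mul_pow,
      Real.norm_eq_abs, sq_abs, real_inner_comm z v]
    ring
  have hsq : ‖z - η • v‖ ^ 2 ≤ ((1 - η * μ) * ‖z‖) ^ 2 := by
    rw [hLHS]
    have ht0 : 0 ≤ t := by positivity
    have hexp2 : ((1 - η * μ) * ‖z‖) ^ 2 = (1 - η * μ) ^ 2 * t := by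
      rw [mul_pow, ht]
    rw [hexp2]
    have hA : 0 ≤ η * (2 - η * (μ + L)) := mul_nonneg hη0 (by linarith)
    have hB : 0 ≤ (η * (2 - η * (μ + L))) * (s - μ * t) := mul_nonneg hA (by linarith)
    have hC : 0 ≤ η ^ 2 * ((L - μ) * (s - μ * t) - (n - 2 * μ * s + μ ^ 2 * t)) :=
      mul_nonneg (sq_nonneg η) (by linarith)
    nlinarith [hB, hC]
  have h1 : 0 ≤ (1 - η * μ) * ‖z‖ := mul_nonneg (by linarith) (norm_nonneg _)
  exact (pow_le_pow_iff_left₀ (norm_nonneg _) h1 two_ne_zero).mp hsq
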